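/- For every basic Boolean formula φ over the variables v_1, ..., v_n, there exists an instruction sequence X ∈ IS_br^na in which no primitive instruction contains the basic instruction out.set:false, such that X computes the Boolean function induced by φ and psize(X) ≤ c·size(φ) + c for a constant c independent of φ. -/

import Mathlib

/-- Boolean register names: `inp i` is input register `in:(i+1)`,
`aux i` is auxiliary register `aux:(i+1)`, `out` is the output register. -/
inductive Reg where
  | inp : ℕ → Reg
  | aux : ℕ → Reg
  | out : Reg
deriving DecidableEq

/-- Basic instructions: register reads/writes, and (for splitting instruction
sequences) `split p` and `reply p` for Boolean parameters `p`. -/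
inductive BInstr where
  | get : Reg → BInstr
  | set : Reg → Bool → BInstr
  | split : ℕ → BInstr
  | reply : ℕ → BInstr
deriving DecidableEq

/-- Primitive instructions. -/
inductive PInstr where
  | plain : BInstr → PInstr
  | pos : BInstr → PInstr
  | neg : BInstr → PInstr
  | jump : ℕ → PInstr
  | halt : PInstr
deriving DecidableEq

abbrev RegState := Reg → Bool

/-- State change caused by processing a basic instruction. -/
def BInstr.effect : BInstr → RegState → RegState
  | .set r b, s => Function.update s r b
  | _, s => s

/-- Reply produced by processing a basic instruction. -/
def BInstr.rpl : BInstr → RegState → Bool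
  | .get r, s => s r
  | .set _ b, _ => b
  | _, _ => false

def BInstr.isSplitReply : BInstr → Bool
  | .split _ => true
  | .reply _ => true
  | _ => false

/-- Single-thread execution of an instruction sequence on Boolean registers;
`none` means deadlock, `some s` means termination in register state `s`.
(`split`/`reply` instructions make no sense here and deadlock.) -/
def exec : List PInstr → RegState → Option RegState
  | [], _ => none
  | .plain a :: X, s =>
      if a.isSplitReply then none else exec X (a.effect s)
  | .pos a :: X, s =>
      if a.isSplitReply then none
      else if a.rpl s then exec X (a.effect s) else exec (X.drop 1) (a.effect s)
  | .neg a :: X, s =>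
      if a.isSplitReply then none
      else if a.rpl s then exec (X.drop 1) (a.effect s) else exec X (a.effect s)
  | .jump 0 :: _, _ => none
  | .jump (l+1) :: X, s => exec (X.drop l) s
  | .halt :: _, s => some s
termination_by X _ => X.length
decreasing_by all_goals (simp only [List.length_drop, List.length_cons]; omega)

/-- Initial register state: input registers `in:1 .. in:n` contain
`b 0, ..., b (n-1)`; all other registers contain `false`. -/
def initState (n : ℕ) (b : Fin n → Bool) : RegState := fun r =>
  match r with
  | .inp i => if h : i < n then b ⟨i, h⟩ else false
  | _ => false

/-- `X` computes the `n`-ary Boolean function `f`: for every input, execution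
terminates (does not deadlock) with the output register containing `f b`. -/
def Computes {n : ℕ} (f : (Fin n → Bool) → Bool) (X : List PInstr) : Prop :=
  ∀ b : Fin n → Bool, ∃ s : RegState,
    exec X (initState n b) = some s ∧ s Reg.out = f b

/-- Basic instructions allowed in `IS_br`. -/
def BrBasic : BInstr → Prop
  | .get (.inp _) => True
  | .get (.aux _) => True
  | .set (.aux _) _ => True
  | .set .out _ => True
  | _ => False

/-- Basic instructions allowed in `IS_br^na`. -/
def NaBasic : BInstr → Prop
  | .get (.inp _) => True
  | .set .out _ => True
  | _ => False

def InstrBasicOK (P : BInstr → Prop) : PInstr → Prop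
  | .plain a => P a
  | .pos a => P a
  | .neg a => P a
  | _ => True

/-- Membership of `IS_br` (non-empty, only allowed basic instructions). -/
def ISbr (X : List PInstr) : Prop :=
  X ≠ [] ∧ ∀ u ∈ X, InstrBasicOK BrBasic u

/-- Membership of `IS_br^na`. -/
def ISbrna (X : List PInstr) : Prop :=
  X ≠ [] ∧ ∀ u ∈ X, InstrBasicOK NaBasic u

/-- The primitive instruction contains the basic instruction `out.set:false`. -/
def UsesOutSetFalse : PInstr → Prop
  | .plain (.set .out false) => True
  | .pos (.set .out false) => True
  | .neg (.set .out false) => True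
  | _ => False

/-- The class PLIS of Boolean function families computable by
polynomial-length instruction sequences from `IS_br`. -/
def PLIS (F : (n : ℕ) → (Fin n → Bool) → Bool) : Prop :=
  ∃ h : Polynomial ℕ, ∀ n : ℕ, ∃ X : List PInstr,
    ISbr X ∧ Computes (F n) X ∧ X.length ≤ h.eval n

/-- Basic Boolean formulas over the variables `v_1, ..., v_n`
(`var i` is `v_{i+1}`), built with the connectives ¬, ∨ and ∧ only. -/
inductive BForm (n : ℕ) where
  | var : Fin n → BForm n
  | not : BForm n → BForm n
  | or : BForm n → BForm n → BForm n
  | and : BForm n → BForm n → BForm n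

/-- Size (number of symbols) of a basic Boolean formula. -/
def BForm.size {n : ℕ} : BForm n → ℕ
  | .var _ => 1
  | .not φ => φ.size + 1
  | .or φ ψ => φ.size + ψ.size + 1
  | .and φ ψ => φ.size + ψ.size + 1

/-- The Boolean function induced by a basic Boolean formula. -/
def BForm.evalF {n : ℕ} (b : Fin n → Bool) : BForm n → Bool
  | .var i => b i
  | .not φ => !(φ.evalF b)
  | .or φ ψ => φ.evalF b || ψ.evalF b
  | .and φ ψ => φ.evalF b && ψ.evalF b


/-- Compile a formula into a block acting like a test instruction:
true → continue at next instruction, false → skip one instruction. -/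
def comp {n : ℕ} : BForm n → List PInstr
  | .var i => [.pos (.get (.inp i))]
  | .not φ => comp φ ++ [.jump 3, .jump 1]
  | .or φ ψ => comp φ ++ [.jump ((comp ψ).length + 2), .jump 1] ++ comp ψ
  | .and φ ψ => comp φ ++ [.jump 2, .jump ((comp ψ).length + 2)] ++ comp ψ

lemma drop_append_len {α} (l r : List α) (k : ℕ) :
    (l ++ r).drop (l.length + k) = r.drop k := by
  rw [List.drop_append]; simp

lemma comp_spec {n : ℕ} (φ : BForm n) (s : RegState) (rest : List PInstr) :
    exec (comp φ ++ rest) s =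
      if φ.evalF (fun i => s (.inp i)) then exec rest s else exec (rest.drop 1) s := by
  induction φ generalizing rest with
  | var i =>
      simp only [comp, List.cons_append, List.nil_append, exec, BInstr.isSplitReply,
        BInstr.rpl, BInstr.effect, Bool.false_eq_true, if_false, BForm.evalF]
      rfl
  | not φ ih =>
      simp only [comp, BForm.evalF, List.append_assoc, ih, List.cons_append, List.nil_append]
      rcases Bool.eq_false_or_eq_true (φ.evalF (fun i => s (.inp i))) with h | h <;>
        simp only [h, Bool.not_false, Bool.not_true, if_true, Bool.false_eq_true, if_false,
          List.drop_succ_cons, List.drop_zero, exec, List.drop]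
  | or φ ψ ihφ ihψ =>
      simp only [comp, BForm.evalF, List.append_assoc, ihφ, List.cons_append, List.nil_append]
      rcases Bool.eq_false_or_eq_true (φ.evalF (fun i => s (.inp i))) with h | h <;>
        simp only [h, Bool.false_or, Bool.true_or, if_true, Bool.false_eq_true, if_false,
          List.drop_succ_cons, List.drop_zero, exec, List.drop, ihψ]
      rw [List.drop_left]
  | and φ ψ ihφ ihψ =>
      simp only [comp, BForm.evalF, List.append_assoc, ihφ, List.cons_append, List.nil_append]
      rcases Bool.eq_false_or_eq_true (φ.evalF (fun i => s (.inp i))) with h | h <;>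
        simp only [h, Bool.false_and, Bool.true_and, if_true, Bool.false_eq_true, if_false,
          List.drop_succ_cons, List.drop_zero, exec, List.drop, ihψ]
      show exec ((comp ψ ++ rest).drop ((comp ψ).length + 1)) s = exec (rest.drop 1) s
      rw [drop_append_len]

lemma comp_ok {n : ℕ} (φ : BForm n) :
    ∀ u ∈ comp φ, InstrBasicOK NaBasic u ∧ ¬ UsesOutSetFalse u := by
  induction φ with
  | var i =>
      intro u hu
      simp only [comp, List.mem_singleton] at hu
      subst hu; exact ⟨trivial, fun h => h⟩
  | not φ ih =>
      intro u hu
      rw [comp, List.mem_append] at hu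
      rcases hu with h | h
      · exact ih u h
      · simp only [List.mem_cons, List.mem_singleton, List.not_mem_nil, or_false] at h
        rcases h with rfl | rfl <;> exact ⟨trivial, fun h => h⟩
  | or φ ψ ihφ ihψ =>
      intro u hu
      rw [comp, List.append_assoc, List.mem_append] at hu
      rcases hu with h | h
      · exact ihφ u h
      · simp only [List.cons_append, List.nil_append] at h
        rw [List.mem_cons] at h
        rcases h with rfl | h
        · exact ⟨trivial, fun h => h⟩
        rw [List.mem_cons] at h
        rcases h with rfl | h
        · exact ⟨trivial, fun h => h⟩
        exact ihψ u h
  | and φ ψ ihφ ihψ =>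
      intro u hu
      rw [comp, List.append_assoc, List.mem_append] at hu
      rcases hu with h | h
      · exact ihφ u h
      · simp only [List.cons_append, List.nil_append] at h
        rw [List.mem_cons] at h
        rcases h with rfl | h
        · exact ⟨trivial, fun h => h⟩
        rw [List.mem_cons] at h
        rcases h with rfl | h
        · exact ⟨trivial, fun h => h⟩
        exact ihψ u h

lemma comp_len {n : ℕ} (φ : BForm n) : (comp φ).length ≤ 2 * φ.size := by
  induction φ with
  | var i => simp [comp, BForm.size]
  | not φ ih => simp only [comp, BForm.size, List.length_append]; simp; omega
  | or φ ψ ihφ ihψ =>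
      simp only [comp, BForm.size, List.append_assoc, List.length_append]; simp; omega
  | and φ ψ ihφ ihψ =>
      simp only [comp, BForm.size, List.append_assoc, List.length_append]; simp; omega

/-- Theorem 2 of the paper: the Boolean function induced by a basic Boolean
formula is computed by an instruction sequence from `IS_br^na` of linear
length in which `out.set:false` does not occur. -/
theorem statement1 :
    ∃ c : ℕ, ∀ (n : ℕ) (φ : BForm n),
      ∃ X : List PInstr, ISbrna X ∧
        (∀ u ∈ X, ¬ UsesOutSetFalse u) ∧
        Computes (fun b => BForm.evalF b φ) X ∧
        X.length ≤ c * φ.size + c := by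
  refine ⟨2, fun n φ => ?_⟩
  refine ⟨comp φ ++ [.plain (.set .out true), .halt], ?_, ?_, ?_, ?_⟩
  · constructor
    · simp
    · intro u hu
      simp only [List.mem_append, List.mem_cons, List.mem_singleton] at hu
      rcases hu with h | h | h
      · exact (comp_ok φ u h).1
      · subst h; exact trivial
      · simp at h; subst h; exact trivial
  · intro u hu
    simp only [List.mem_append, List.mem_cons, List.mem_singleton] at hu
    rcases hu with h | h | h
    · exact (comp_ok φ u h).2
    · subst h; exact fun h => h
    · simp at h; subst h; exact fun h => h
  · intro b
    have hs : (fun i => initState n b (.inp i)) ∘ Fin.val = b := by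
      funext i
      simp [initState, i.isLt]
    rw [comp_spec]
    have hb : ∀ ψ : BForm n, ψ.evalF (fun i => initState n b (.inp i)) = ψ.evalF b := by
      intro ψ
      induction ψ with
      | var i => simp [BForm.evalF, initState, i.isLt]
      | not φ ih => simp [BForm.evalF, ih]
      | or φ ψ ihφ ihψ => simp [BForm.evalF, ihφ, ihψ]
      | and φ ψ ihφ ihψ => simp [BForm.evalF, ihφ, ihψ]
    rw [hb]
    cases h : φ.evalF b
    · exact ⟨initState n b, by simp [exec], by simp [initState, h]⟩
    · refine ⟨Function.update (initState n b) .out true, ?_, ?_⟩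
      · simp [exec, BInstr.isSplitReply, BInstr.effect]
      · simp [h]
  · have := comp_len φ
    simp only [List.length_append, List.length_cons, List.length_nil]
    omega
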